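/- Let G be a finite group such that for every proper subgroup M of G, any two Carter subgroups of M are conjugate in M. If H is a Carter subgroup of G and N is a normal subgroup of G, then the image of H under the canonical projection G → G/N is a Carter subgroup of G/N. -/

import Mathlib

/-- A Carter subgroup: a nilpotent self-normalizing subgroup. -/
def IsCarterSubgroup {G : Type*} [Group G] (H : Subgroup G) : Prop :=
  Group.IsNilpotent H ∧ Subgroup.normalizer (H : Set G) = H

/-- A Carter subgroup of `G` contained in `M` is a Carter subgroup of `M`. -/
lemma isCarterSubgroup_subgroupOf {G : Type*} [Group G] {K M : Subgroup G}
    (hK : IsCarterSubgroup K) (hle : K ≤ M) : IsCarterSubgroup (K.subgroupOf M) := by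
  constructor
  · haveI : Group.IsNilpotent K := hK.1
    exact nilpotent_of_surjective (Subgroup.subgroupOfEquivOfLe hle).symm.toMonoidHom
      (Subgroup.subgroupOfEquivOfLe hle).symm.surjective
  · refine le_antisymm ?_ Subgroup.le_normalizer
    intro x hx
    rw [Subgroup.mem_normalizer_iff] at hx
    have hxK : (x : G) ∈ Subgroup.normalizer (K : Set G) := by
      rw [Subgroup.mem_normalizer_iff]
      intro g
      constructor
      · intro hg
        have := (hx ⟨g, hle hg⟩).mp (by simpa [Subgroup.mem_subgroupOf] using hg)
        simpa [Subgroup.mem_subgroupOf] using this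
      · intro hg
        have hgM : g ∈ M := by
          have : (x : G)⁻¹ * ((x : G) * g * (x : G)⁻¹) * (x : G) ∈ M := by
            exact M.mul_mem (M.mul_mem (M.inv_mem x.2) (hle hg)) x.2
          simpa [mul_assoc] using this
        have := (hx ⟨g, hgM⟩).mpr (by simpa [Subgroup.mem_subgroupOf] using hg)
        simpa [Subgroup.mem_subgroupOf] using this
    rw [hK.2] at hxK
    simpa [Subgroup.mem_subgroupOf] using hxK

/-- The image of a Carter subgroup under an automorphism is a Carter subgroup. -/
lemma isCarterSubgroup_map_equiv {G : Type*} [Group G] {K : Subgroup G}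
    (hK : IsCarterSubgroup K) (e : G ≃* G) : IsCarterSubgroup (K.map e.toMonoidHom) := by
  constructor
  · haveI : Group.IsNilpotent K := hK.1
    exact nilpotent_of_surjective (e.toMonoidHom.subgroupMap K)
      (e.toMonoidHom.subgroupMap_surjective K)
  · rw [← Subgroup.map_equiv_normalizer_eq K e, hK.2]

/-- If Carter subgroups of every proper subgroup of a finite group `G` are conjugate, then the
image of a Carter subgroup of `G` in any quotient of `G` is a Carter subgroup. -/
theorem carter_image_of_proper_conjugacy {G : Type*} [Group G] [Finite G]
    (hprop : ∀ M : Subgroup G, M ≠ ⊤ →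
      ∀ H₁ H₂ : Subgroup M, IsCarterSubgroup H₁ → IsCarterSubgroup H₂ →
        ∃ m : M, H₂ = H₁.map (MulAut.conj m).toMonoidHom)
    (H N : Subgroup G) [N.Normal] (hH : IsCarterSubgroup H) :
    IsCarterSubgroup (H.map (QuotientGroup.mk' N)) := by
  set π := QuotientGroup.mk' N with hπ
  have hmapsup : (H ⊔ N).map π = H.map π := by
    rw [Subgroup.map_sup]
    have hNbot : N.map π = ⊥ := by
      rw [Subgroup.map_eq_bot_iff, hπ, QuotientGroup.ker_mk']
    rw [hNbot, sup_bot_eq]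
  constructor
  · haveI : Group.IsNilpotent H := hH.1
    exact nilpotent_of_surjective (π.subgroupMap H) (π.subgroupMap_surjective H)
  refine le_antisymm ?_ Subgroup.le_normalizer
  by_cases htop : H ⊔ N = ⊤
  · have : H.map π = ⊤ := by
      rw [← hmapsup, htop, Subgroup.map_top_of_surjective _ (QuotientGroup.mk'_surjective N)]
    rw [this]
    exact le_top
  intro xbar hx
  obtain ⟨k, rfl⟩ := QuotientGroup.mk'_surjective N xbar
  rw [Subgroup.mem_normalizer_iff] at hx
  set M : Subgroup G := H ⊔ N with hM
  have hHM : H ≤ M := le_sup_left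
  have hcomap : Subgroup.comap π (H.map π) = M := by
    rw [Subgroup.comap_map_eq, hπ, QuotientGroup.ker_mk']
  have hkN : ∀ g : G, g ∈ M ↔ k * g * k⁻¹ ∈ M := by
    intro g
    rw [← hcomap]
    simp only [Subgroup.mem_comap, map_mul, map_inv]
    exact hx (π g)
  set H' : Subgroup G := H.map (MulAut.conj k).toMonoidHom with hH'
  have hH'le : H' ≤ M := by
    rintro _ ⟨h, hh, rfl⟩
    exact (hkN h).mp (hHM hh)
  obtain ⟨m, hm⟩ := hprop M htop (H.subgroupOf M) (H'.subgroupOf M)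
    (isCarterSubgroup_subgroupOf hH hHM)
    (isCarterSubgroup_subgroupOf (isCarterSubgroup_map_equiv hH (MulAut.conj k)) hH'le)
  -- push `hm` back into `G`
  have heq : H' = H.map (MulAut.conj (m : G)).toMonoidHom := by
    have h1 : (H'.subgroupOf M).map M.subtype = H' := by
      rw [Subgroup.subgroupOf_map_subtype, inf_eq_left.mpr hH'le]
    have h2 : ((H.subgroupOf M).map (MulAut.conj m).toMonoidHom).map M.subtype
        = H.map (MulAut.conj (m : G)).toMonoidHom := by
      rw [Subgroup.map_map]
      have hcomm : M.subtype.comp (MulAut.conj m).toMonoidHom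
          = (MulAut.conj (m : G)).toMonoidHom.comp M.subtype := by
        ext x
        simp [MulAut.conj]
      rw [hcomm, ← Subgroup.map_map, Subgroup.subgroupOf_map_subtype, inf_eq_left.mpr hHM]
    rw [← h1, hm, h2]
  -- conclude that (m : G)⁻¹ * k normalizes H
  set z : G := (m : G)⁻¹ * k with hz
  have hzH : z ∈ Subgroup.normalizer (H : Set G) := by
    rw [Subgroup.mem_normalizer_iff]
    intro g
    constructor
    · intro hg
      have : k * g * k⁻¹ ∈ H' := ⟨g, hg, rfl⟩
      rw [heq] at this
      obtain ⟨h, hh, hhe⟩ := this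
      simp only [MulEquiv.coe_toMonoidHom, MulAut.conj_apply] at hhe
      have h5 : z * g * z⁻¹ = h := by
        have h4 : z * g * z⁻¹ = (m : G)⁻¹ * (k * g * k⁻¹) * (m : G) := by rw [hz]; group
        rw [h4, ← hhe]
        group
      rw [h5]
      exact hh
    · intro hg
      have h1 : (m : G) * (z * g * z⁻¹) * (m : G)⁻¹ ∈ H.map (MulAut.conj (m : G)).toMonoidHom :=
        ⟨z * g * z⁻¹, hg, rfl⟩
      rw [← heq] at h1
      have h2 : (m : G) * (z * g * z⁻¹) * (m : G)⁻¹ = k * g * k⁻¹ := by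
        rw [hz]; group
      rw [h2] at h1
      obtain ⟨h, hh, hhe⟩ := h1
      simp only [MulEquiv.coe_toMonoidHom, MulAut.conj_apply] at hhe
      have h3 : k⁻¹ * (k * h * k⁻¹) * k = k⁻¹ * (k * g * k⁻¹) * k := by rw [hhe]
      have hgh : h = g := by simpa [mul_assoc] using h3
      exact hgh ▸ hh
  rw [hH.2] at hzH
  have hkM : k ∈ M := by
    have : (m : G) * z ∈ M := M.mul_mem m.2 (hHM hzH)
    simpa [hz] using this
  have : π k ∈ M.map π := ⟨k, hkM, rfl⟩
  rwa [hM, hmapsup] at this
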